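/- arXiv:2112.05729 — 2 statements merged into one kernel-verified Lean document; each statement's English description precedes it below -/
import Mathlib

section
/- In a two-sector Leontief model with price-dependent demand, x = Ax + d(p), p = Aᵀp + βδ₁, where d : ℝ² → ℝ² is C¹ with each d_i strictly decreasing in p_i, decreasing the energy coefficient A_{12} strictly decreases the equilibrium price p₂ and strictly increases the equilibrium final demand d₂(p₂), provided ‖A‖ < 1 and β > 0 and the column j=2 is downstream of sector 1. -/
set_option maxHeartbeats 1000000

noncomputable def euclideanOpNorm {d : ℕ} (A : Matrix (Fin d) (Fin d) ℝ) : ℝ :=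
  ‖LinearMap.toContinuousLinearMap (Matrix.toEuclideanLin A)‖

lemma key (M : Matrix (Fin 2) (Fin 2) ℝ) (hpos : ∀ i j, 0 ≤ M i j)
    (h : euclideanOpNorm M < 1) :
    M 0 0 < 1 ∧ M 1 1 < 1 ∧ M 1 0 * M 0 1 < (1 - M 0 0) * (1 - M 1 1) := by
  set a := M 0 0 with ha
  set b := M 0 1 with hb
  set c := M 1 0 with hc
  set d := M 1 1 with hd
  set s : ℝ := Real.sqrt ((a - d)^2 + 4 * b * c) with hsdef
  have hbc : 0 ≤ b * c := mul_nonneg (hpos 0 1) (hpos 1 0)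
  have hs0 : 0 ≤ s := Real.sqrt_nonneg _
  have hs2 : s ^ 2 = (a - d)^2 + 4 * b * c := by
    rw [hsdef]; exact Real.sq_sqrt (by nlinarith)
  set lam : ℝ := (a + d + s) / 2 with hlam
  -- lam is an eigenvalue
  have hdet : (M - lam • (1 : Matrix (Fin 2) (Fin 2) ℝ)).det = 0 := by
    rw [Matrix.det_fin_two]
    simp only [Matrix.sub_apply, Matrix.smul_apply, Matrix.one_apply_eq,
      Matrix.one_apply_ne (by decide : (0 : Fin 2) ≠ 1),
      Matrix.one_apply_ne (by decide : (1 : Fin 2) ≠ 0), smul_eq_mul,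
      mul_one, mul_zero, sub_zero]
    rw [← ha, ← hb, ← hc, ← hd]
    nlinarith [hs2]
  obtain ⟨v, hv0, hv⟩ := (Matrix.exists_mulVec_eq_zero_iff).2 hdet
  have hMv : M.mulVec v = lam • v := by
    have := hv
    rw [Matrix.sub_mulVec, sub_eq_zero, Matrix.smul_mulVec, Matrix.one_mulVec] at this
    exact this
  -- eigenvalue bound
  have hlamle : |lam| < 1 := by
    set x : EuclideanSpace ℝ (Fin 2) := (WithLp.equiv 2 (Fin 2 → ℝ)).symm v with hx
    have hxne : ‖x‖ ≠ 0 := by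
      simp only [norm_ne_zero_iff, hx]
      exact fun hcon => hv0 (by simpa using congrArg (WithLp.equiv 2 (Fin 2 → ℝ)) hcon)
    have hxpos : 0 < ‖x‖ := lt_of_le_of_ne (norm_nonneg _) (Ne.symm hxne)
    have happ : (Matrix.toEuclideanLin M) x = lam • x := by
      rw [hx, WithLp.equiv_symm_apply, Matrix.toEuclideanLin_apply_piLp_toLp, hMv]
      simp
    have hbound : ‖(LinearMap.toContinuousLinearMap (Matrix.toEuclideanLin M)) x‖
        ≤ euclideanOpNorm M * ‖x‖ := ContinuousLinearMap.le_opNorm _ _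
    rw [LinearMap.coe_toContinuousLinearMap', happ, norm_smul] at hbound
    have : |lam| ≤ euclideanOpNorm M := by
      rw [Real.norm_eq_abs] at hbound
      exact le_of_mul_le_mul_right hbound hxpos
    exact lt_of_le_of_lt this h
  have hlam1 : lam < 1 := lt_of_le_of_lt (le_abs_self _) hlamle
  have hsabs : |a - d| ≤ s := by
    rw [hsdef]
    refine le_trans ?_ (Real.sqrt_le_sqrt (by nlinarith : (a-d)^2 ≤ (a-d)^2 + 4*b*c))
    rw [← Real.sqrt_sq_eq_abs]
  have h1 : a < 1 := by
    have := abs_le.1 hsabs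
    rw [hlam] at hlam1; linarith [this.2]
  have h2 : d < 1 := by
    have := abs_le.1 hsabs
    rw [hlam] at hlam1; linarith [this.1]
  refine ⟨h1, h2, ?_⟩
  have hs1 : s < 2 - a - d := by rw [hlam] at hlam1; linarith
  nlinarith [hs2, hs0]

/-- Price rebound mechanism in a two-sector Leontief model (sector `0` = energy):
with prices `p = Aᵀ p + β δ₀` and demand `d i` strictly decreasing and C¹, strictly
decreasing the energy coefficient `A₀₁` (by `0 < ε ≤ A₀₁`, keeping the model
well-posed) strictly decreases the equilibrium price `p₁` of the target sector and
strictly increases its equilibrium final demand `d₁(p₁)`. -/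
theorem stmt_12 (A : Matrix (Fin 2) (Fin 2) ℝ)
    (hApos : ∀ i j, 0 ≤ A i j) (hA : euclideanOpNorm A < 1)
    (hdown : 0 < A 0 1)
    (β : ℝ) (hβ : 0 < β)
    (dem : Fin 2 → ℝ → ℝ)
    (hdem : ∀ i, ContDiff ℝ 1 (dem i)) (hanti : ∀ i, StrictAnti (dem i))
    (ε : ℝ) (hε : 0 < ε) (hεA : ε ≤ A 0 1)
    (A' : Matrix (Fin 2) (Fin 2) ℝ)
    (hA'def : A' = A - Matrix.single 0 1 ε)
    (hA' : euclideanOpNorm A' < 1)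
    (p p' : Fin 2 → ℝ)
    (hp : p = Matrix.mulVec A.transpose p + Pi.single 0 β)
    (hp' : p' = Matrix.mulVec A'.transpose p' + Pi.single 0 β) :
    p' 1 < p 1 ∧ dem 1 (p 1) < dem 1 (p' 1) := by
  have hA'00 : A' 0 0 = A 0 0 := by rw [hA'def]; simp [Matrix.single]
  have hA'01 : A' 0 1 = A 0 1 - ε := by rw [hA'def]; simp [Matrix.single]
  have hA'10 : A' 1 0 = A 1 0 := by rw [hA'def]; simp [Matrix.single]
  have hA'11 : A' 1 1 = A 1 1 := by rw [hA'def]; simp [Matrix.single]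
  have hA'pos : ∀ i j, 0 ≤ A' i j := by
    intro i j
    rw [hA'def]
    simp only [Matrix.sub_apply, Matrix.single, Matrix.of_apply]
    split_ifs with h
    · obtain ⟨h1, h2⟩ := h
      subst h1; subst h2
      linarith [hεA]
    · simpa using hApos i j
  obtain ⟨h1, h2, hD⟩ := key A hApos hA
  obtain ⟨h1', h2', hD'⟩ := key A' hA'pos hA'
  rw [hA'00, hA'01, hA'10, hA'11] at hD'
  have e0 : p 0 = A 0 0 * p 0 + A 1 0 * p 1 + β := by
    have := congrFun hp 0
    simpa [Matrix.mulVec, dotProduct, Fin.sum_univ_two,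
      Matrix.transpose_apply, Pi.single_apply] using this
  have e1 : p 1 = A 0 1 * p 0 + A 1 1 * p 1 := by
    have := congrFun hp 1
    simpa [Matrix.mulVec, dotProduct, Fin.sum_univ_two,
      Matrix.transpose_apply, Pi.single_apply] using this
  have e0' : p' 0 = A 0 0 * p' 0 + A 1 0 * p' 1 + β := by
    have := congrFun hp' 0
    simpa [Matrix.mulVec, dotProduct, Fin.sum_univ_two,
      Matrix.transpose_apply, Pi.single_apply, hA'00, hA'10] using this
  have e1' : p' 1 = (A 0 1 - ε) * p' 0 + A 1 1 * p' 1 := by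
    have := congrFun hp' 1
    simpa [Matrix.mulVec, dotProduct, Fin.sum_univ_two,
      Matrix.transpose_apply, Pi.single_apply, hA'01, hA'11] using this
  have hc0 : 0 ≤ A 1 0 := hApos 1 0
  have hp1 : p 1 * ((1 - A 0 0) * (1 - A 1 1) - A 0 1 * A 1 0) = A 0 1 * β := by
    nlinarith [e0, e1]
  have hp1' : p' 1 * ((1 - A 0 0) * (1 - A 1 1) - (A 0 1 - ε) * A 1 0)
      = (A 0 1 - ε) * β := by
    nlinarith [e0', e1']
  have hDpos : 0 < (1 - A 0 0) * (1 - A 1 1) - A 0 1 * A 1 0 := by nlinarith [hD]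
  have hD'pos : 0 < (1 - A 0 0) * (1 - A 1 1) - (A 0 1 - ε) * A 1 0 := by
    nlinarith [hD']
  have h1a : (0:ℝ) < 1 - A 0 0 := by linarith
  have h1d : (0:ℝ) < 1 - A 1 1 := by linarith
  have h3 : (A 0 1 - ε) * β * ((1 - A 0 0) * (1 - A 1 1) - A 0 1 * A 1 0)
      < A 0 1 * β * ((1 - A 0 0) * (1 - A 1 1) - (A 0 1 - ε) * A 1 0) := by
    nlinarith [mul_pos (mul_pos (mul_pos hε hβ) h1a) h1d]
  have h5 : p' 1 * (((1 - A 0 0) * (1 - A 1 1) - A 0 1 * A 1 0) * ((1 - A 0 0) * (1 - A 1 1) - (A 0 1 - ε) * A 1 0)) = (A 0 1 - ε) * β * ((1 - A 0 0) * (1 - A 1 1) - A 0 1 * A 1 0) := by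
    linear_combination ((1 - A 0 0) * (1 - A 1 1) - A 0 1 * A 1 0) * hp1'
  have h6 : p 1 * (((1 - A 0 0) * (1 - A 1 1) - A 0 1 * A 1 0) * ((1 - A 0 0) * (1 - A 1 1) - (A 0 1 - ε) * A 1 0)) = A 0 1 * β * ((1 - A 0 0) * (1 - A 1 1) - (A 0 1 - ε) * A 1 0) := by
    linear_combination ((1 - A 0 0) * (1 - A 1 1) - (A 0 1 - ε) * A 1 0) * hp1
  have hmain : p' 1 < p 1 := by
    have h7 : p' 1 * (((1 - A 0 0) * (1 - A 1 1) - A 0 1 * A 1 0) * ((1 - A 0 0) * (1 - A 1 1) - (A 0 1 - ε) * A 1 0)) < p 1 * (((1 - A 0 0) * (1 - A 1 1) - A 0 1 * A 1 0) * ((1 - A 0 0) * (1 - A 1 1) - (A 0 1 - ε) * A 1 0)) := by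
      rw [h5, h6]; exact h3
    exact lt_of_mul_lt_mul_right h7 (le_of_lt (mul_pos hDpos hD'pos))
  exact ⟨hmain, hanti 1 hmain⟩
end

section
/- In the system x = τ, y = u_y(αx + βz), z = g(y) where g : ℝ → ℝ is C¹ and strictly monotone with g' never zero, for every u_y in a neighborhood of 1 there exists a replacement assignment z = h_{u_y}(y) (depending only on y) such that the new equilibrium z-value equals the unintervened equilibrium z-value, for all τ in a neighborhood of a reference τ₀, provided α ≠ 0, and the unintervened system is uniquely solvable near the reference point (1 − βg'(y₀) ≠ 0 at the reference equilibrium). -/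
open Topology

/-- Invariant soft intervention in the nonlinear system `x = τ`, `y = u_y(αx + βz)`,
`z = g(y)`: for `g` C¹, strictly monotone with nonvanishing derivative, `α ≠ 0`, and
the unintervened system uniquely solvable at the reference point
(`1 - β g'(y₀) ≠ 0`), for every `u_y` near `1` there is a replacement assignment
`z = h(y)` (depending only on `y`) such that the intervened equilibrium `z`-value
equals the unintervened equilibrium `z`-value for all `τ` near `τ₀`. -/
theorem stmt_19 (α β τ₀ y₀ z₀ : ℝ) (hα : α ≠ 0)
    (g : ℝ → ℝ) (hg : ContDiff ℝ 1 g) (hg' : ∀ t, deriv g t ≠ 0)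
    (hmono : StrictMono g ∨ StrictAnti g)
    (hy₀ : y₀ = α * τ₀ + β * z₀) (hz₀ : z₀ = g y₀)
    (hsolv : 1 - β * deriv g y₀ ≠ 0) :
    ∃ W ∈ 𝓝 (1 : ℝ), ∀ u_y ∈ W,
      ∃ h : ℝ → ℝ, ∃ T ∈ 𝓝 τ₀,
        ∃ ys zs y' z' : ℝ → ℝ,
          ys τ₀ = y₀ ∧ zs τ₀ = z₀ ∧
          ∀ τ ∈ T,
            -- unintervened equilibrium branch
            (ys τ = α * τ + β * zs τ ∧ zs τ = g (ys τ)) ∧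
            -- intervened equilibrium with the replacement assignment `z = h(y)`
            (y' τ = u_y * (α * τ + β * z' τ) ∧ z' τ = h (y' τ)) ∧
            -- invariance of the `z`-value
            z' τ = zs τ := by
  classical
  -- the map τ = φ(y) := (y - β g(y))/α, whose local inverse is the branch ys
  set φ : ℝ → ℝ := fun y => (y - β * g y) / α with hφdef
  have hφy₀ : φ y₀ = τ₀ := by
    have : y₀ - β * g y₀ = α * τ₀ := by rw [← hz₀]; linarith [hy₀]
    simp [hφdef, this, mul_comm, mul_div_assoc, hα]
  have hgd : HasStrictDerivAt g (deriv g y₀) y₀ := hg.hasStrictDerivAt one_ne_zero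
  have hφd : HasStrictDerivAt φ ((1 - β * deriv g y₀) / α) y₀ := by
    simpa using ((hasStrictDerivAt_id y₀).sub (hgd.const_mul β)).div_const α
  have hφ' : (1 - β * deriv g y₀) / α ≠ 0 := div_ne_zero hsolv hα
  have hF := hφd.hasStrictFDerivAt_equiv hφ'
  set ys : ℝ → ℝ := hF.localInverse φ _ y₀ with hysdef
  have hys₀ : ys τ₀ = y₀ := by
    have := hF.localInverse_apply_image
    rwa [hφy₀] at this
  set T : Set ℝ := {τ | φ (ys τ) = τ} with hTdef
  have hT : T ∈ 𝓝 τ₀ := by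
    have := hF.eventually_right_inverse
    rw [hφy₀] at this
    exact this
  have hτ₀T : τ₀ ∈ T := mem_of_mem_nhds hT
  -- the unintervened equations on T
  have hTeq : ∀ τ ∈ T, ys τ = α * τ + β * g (ys τ) := by
    intro τ hτ
    have : (ys τ - β * g (ys τ)) / α = τ := hτ
    field_simp at this
    linarith
  set zs : ℝ → ℝ := fun τ => g (ys τ) with hzsdef
  refine ⟨{0}ᶜ, isOpen_compl_singleton.mem_nhds (by norm_num), fun u_y hu => ?_⟩
  have hu0 : u_y ≠ 0 := hu
  set y' : ℝ → ℝ := fun τ => u_y * ys τ with hy'def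
  haveI : Nonempty T := ⟨⟨τ₀, hτ₀T⟩⟩
  set h : ℝ → ℝ := fun v => zs ((Function.invFun (fun t : T => y' t.1) v : T) : ℝ) with hhdef
  refine ⟨h, T, hT, ys, zs, y', zs, hys₀, by simp [hzsdef, hys₀, hz₀], fun τ hτ => ?_⟩
  have key : y' τ = u_y * (α * τ + β * zs τ) := by
    rw [hy'def]; simp only []
    rw [hTeq τ hτ]
  refine ⟨⟨hTeq τ hτ, rfl⟩, ⟨key, ?_⟩, rfl⟩
  -- h (y' τ) = zs τ
  have hmem : ∃ t : T, y' t.1 = y' τ := ⟨⟨τ, hτ⟩, rfl⟩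
  set t : T := Function.invFun (fun t : T => y' t.1) (y' τ) with htdef
  have ht : y' t.1 = y' τ := Function.invFun_eq hmem
  have hyst : ys t.1 = ys τ := by
    have := ht
    simp only [hy'def] at this
    exact mul_left_cancel₀ hu0 this
  have htτ : (t : ℝ) = τ := by
    have h1 : φ (ys t.1) = t.1 := t.2
    have h2 : φ (ys τ) = τ := hτ
    rw [hyst] at h1
    rw [← h1, h2]
  show zs τ = h (y' τ)
  rw [hhdef]
  simp only []
  rw [← htdef, htτ]
end
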